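/- Let A₁,…,A_N be contractions on a Banach space each satisfying condition (W') (‖A_k x‖ = ‖x‖ ⟹ A_k x = x), and let T = Σ α_k A_k with all α_k > 0 and Σ α_k = 1. Then Ker(I - T) = ∩_k Ker(I - A_k). -/

import Mathlib

theorem stmt15 {X : Type*} [NormedAddCommGroup X] [NormedSpace ℂ X] [CompleteSpace X]
    (N : ℕ) (A : Fin N → (X →L[ℂ] X)) (hA : ∀ k, ‖A k‖ ≤ 1)
    (α : Fin N → ℝ) (hα : ∀ k, 0 < α k) (hsum : ∑ k, α k = 1)
    (hW : ∀ k, ∀ x : X, ‖(A k) x‖ = ‖x‖ → (A k) x = x) :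
    LinearMap.ker ((1 - ∑ k, (α k : ℂ) • A k : X →L[ℂ] X) : X →ₗ[ℂ] X) = ⨅ k, LinearMap.ker ((1 - A k : X →L[ℂ] X) : X →ₗ[ℂ] X) := by
  ext x
  simp only [LinearMap.mem_ker, Submodule.mem_iInf, ContinuousLinearMap.coe_coe, ContinuousLinearMap.coe_sub',
    Pi.sub_apply, ContinuousLinearMap.one_apply, sub_eq_zero]
  constructor
  · intro hx
    have hTx : ∑ k, (α k : ℂ) • A k x = x := by
      have := hx.symm
      simpa [ContinuousLinearMap.sum_apply] using this
    have h1 : ∀ k, ‖A k x‖ ≤ ‖x‖ := fun k =>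
      ((A k).le_opNorm x).trans (mul_le_of_le_one_left (norm_nonneg x) (hA k))
    have h2 : ‖x‖ ≤ ∑ k, α k * ‖A k x‖ := by
      calc ‖x‖ = ‖∑ k, (α k : ℂ) • A k x‖ := by rw [hTx]
        _ ≤ ∑ k, ‖(α k : ℂ) • A k x‖ := norm_sum_le _ _
        _ = ∑ k, α k * ‖A k x‖ := by
            refine Finset.sum_congr rfl fun k _ => ?_
            rw [norm_smul, Complex.norm_real, Real.norm_eq_abs, abs_of_pos (hα k)]
    have hnorm : ∀ k, ‖A k x‖ = ‖x‖ := by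
      intro k
      by_contra hne
      have hk : ‖A k x‖ < ‖x‖ := lt_of_le_of_ne (h1 k) hne
      have : ∑ j, α j * ‖A j x‖ < ∑ j, α j * ‖x‖ := by
        refine Finset.sum_lt_sum (fun j _ => ?_) ⟨k, Finset.mem_univ k, ?_⟩
        · exact mul_le_mul_of_nonneg_left (h1 j) (hα j).le
        · exact mul_lt_mul_of_pos_left hk (hα k)
      rw [← Finset.sum_mul, hsum, one_mul] at this
      exact absurd h2 (not_le.mpr this)
    intro k
    exact (hW k x (hnorm k)).symm
  · intro h
    have : (∑ k, (α k : ℂ) • A k) x = ∑ k, (α k : ℂ) • x := by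
      simp only [ContinuousLinearMap.sum_apply, ContinuousLinearMap.coe_smul',
        Pi.smul_apply]
      exact Finset.sum_congr rfl fun k _ => by rw [← h k]
    rw [this, ← Finset.sum_smul]
    norm_cast
    rw [hsum, one_smul]
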